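/- Let R be a finite subset of ℝ, f and g probability mass functions on R with f(ρ')·g(ρ) ≥ f(ρ)·g(ρ') for all ρ > ρ' (g dominates f in likelihood ratio). Then the function ε ↦ Σ over (r_1,...,r_n) ∈ R^n of [exp(ε·r_i/2)/Σ_k exp(ε·r_k/2)] · (Π_{k≠i} f(r_k)) · g(r_i) is monotonically nondecreasing in ε ≥ 0. -/

import Mathlib

open Real Finset

private lemma aux_hasDerivAt_term {n : ℕ} [Nonempty (Fin n)] (r : Fin n → ℝ) (i : Fin n) (ε : ℝ) :
    HasDerivAt (fun ε : ℝ => Real.exp (ε * r i / 2) / ∑ k, Real.exp (ε * r k / 2))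
      ((∑ j, Real.exp (ε * r i / 2) * Real.exp (ε * r j / 2) * (r i - r j) / 2) /
        (∑ k, Real.exp (ε * r k / 2)) ^ 2) ε := by
  have hE : ∀ a : ℝ, HasDerivAt (fun ε : ℝ => Real.exp (ε * a / 2))
      (a / 2 * Real.exp (ε * a / 2)) ε := by
    intro a
    have h1 : HasDerivAt (fun ε : ℝ => ε * a / 2) (a / 2) ε := by
      simpa using ((hasDerivAt_id ε).mul_const a).div_const 2
    simpa [mul_comm] using h1.exp
  have hS : HasDerivAt (fun ε : ℝ => ∑ k, Real.exp (ε * r k / 2))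
      (∑ k, r k / 2 * Real.exp (ε * r k / 2)) ε :=
    HasDerivAt.fun_sum fun k _ => hE (r k)
  have hSpos : 0 < ∑ k, Real.exp (ε * r k / 2) :=
    Finset.sum_pos (fun k _ => Real.exp_pos _) Finset.univ_nonempty
  have hdiv := (hE (r i)).div hS hSpos.ne'
  have hnum : r i / 2 * Real.exp (ε * r i / 2) * (∑ k, Real.exp (ε * r k / 2)) -
      Real.exp (ε * r i / 2) * (∑ k, r k / 2 * Real.exp (ε * r k / 2)) =
      ∑ j, Real.exp (ε * r i / 2) * Real.exp (ε * r j / 2) * (r i - r j) / 2 := by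
    rw [Finset.mul_sum, Finset.mul_sum, ← Finset.sum_sub_distrib]
    exact Finset.sum_congr rfl fun j _ => by ring
  rw [← hnum]
  exact hdiv

private lemma aux_D_nonneg (R : Finset ℝ) (f g : ℝ → ℝ)
    (hf0 : ∀ ρ ∈ R, 0 ≤ f ρ) (hg0 : ∀ ρ ∈ R, 0 ≤ g ρ)
    (hmlr : ∀ ρ ∈ R, ∀ ρ' ∈ R, ρ' < ρ → f ρ * g ρ' ≤ f ρ' * g ρ)
    {n : ℕ} (i : Fin n) (ε : ℝ) :
    0 ≤ ∑ t : Fin n → {x // x ∈ R},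
        ((∑ j, Real.exp (ε * (t i : ℝ) / 2) * Real.exp (ε * (t j : ℝ) / 2) *
            ((t i : ℝ) - (t j : ℝ)) / 2) /
          (∑ k, Real.exp (ε * (t k : ℝ) / 2)) ^ 2) *
          (∏ k ∈ Finset.univ.erase i, f (t k)) * g (t i) := by
  classical
  set B : (Fin n → {x // x ∈ R}) → Fin n → ℝ := fun t j =>
    (Real.exp (ε * (t i : ℝ) / 2) * Real.exp (ε * (t j : ℝ) / 2) *
        ((t i : ℝ) - (t j : ℝ)) / 2) /
      (∑ k, Real.exp (ε * (t k : ℝ) / 2)) ^ 2 *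
      (∏ k ∈ Finset.univ.erase i, f (t k)) * g (t i) with hB
  have h1 : ∀ t : Fin n → {x // x ∈ R},
      ((∑ j, Real.exp (ε * (t i : ℝ) / 2) * Real.exp (ε * (t j : ℝ) / 2) *
          ((t i : ℝ) - (t j : ℝ)) / 2) /
        (∑ k, Real.exp (ε * (t k : ℝ) / 2)) ^ 2) *
        (∏ k ∈ Finset.univ.erase i, f (t k)) * g (t i) = ∑ j, B t j := by
    intro t
    rw [hB, Finset.sum_div, Finset.sum_mul, Finset.sum_mul]
  rw [Finset.sum_congr rfl fun t _ => h1 t, Finset.sum_comm]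
  refine Finset.sum_nonneg fun j _ => ?_
  set σ : (Fin n → {x // x ∈ R}) ≃ (Fin n → {x // x ∈ R}) :=
    (Equiv.swap i j).arrowCongr (Equiv.refl _) with hσ
  have hσdef : ∀ (t : Fin n → {x // x ∈ R}) (k : Fin n), σ t k = t (Equiv.swap i j k) := by
    intro t k
    simp [hσ, Equiv.arrowCongr]
  have h2 : ∑ t : Fin n → {x // x ∈ R}, B t j = ∑ t : Fin n → {x // x ∈ R}, B (σ t) j :=
    (Equiv.sum_comp σ fun t => B t j).symm
  have hpt : ∀ t : Fin n → {x // x ∈ R}, 0 ≤ B t j + B (σ t) j := by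
    intro t
    by_cases hij : j = i
    · subst hij
      have hσt : σ t = t := by
        funext k; rw [hσdef]; simp
      simp [hB, hσt, sub_self]
    · -- facts about σ t
      have hσi : σ t i = t j := by rw [hσdef, Equiv.swap_apply_left]
      have hσj : σ t j = t i := by rw [hσdef, Equiv.swap_apply_right]
      have hσk : ∀ k : Fin n, k ≠ i → k ≠ j → σ t k = t k := by
        intro k hki hkj
        rw [hσdef, Equiv.swap_apply_of_ne_of_ne hki hkj]
      have hSsum : (∑ k, Real.exp (ε * ((σ t) k : ℝ) / 2)) =
          ∑ k, Real.exp (ε * (t k : ℝ) / 2) := by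
        calc (∑ k, Real.exp (ε * ((σ t) k : ℝ) / 2))
            = ∑ k, Real.exp (ε * (t (Equiv.swap i j k) : ℝ) / 2) := by
              exact Finset.sum_congr rfl fun k _ => by rw [hσdef]
          _ = ∑ k, Real.exp (ε * (t k : ℝ) / 2) :=
              Equiv.sum_comp (Equiv.swap i j) fun k => Real.exp (ε * (t k : ℝ) / 2)
      have hjmem : j ∈ Finset.univ.erase i := Finset.mem_erase.2 ⟨hij, Finset.mem_univ j⟩
      have hprod : (∏ k ∈ Finset.univ.erase i, f (t k)) =
          f (t j) * ∏ k ∈ (Finset.univ.erase i).erase j, f (t k) :=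
        (Finset.mul_prod_erase _ _ hjmem).symm
      have hprodσ : (∏ k ∈ Finset.univ.erase i, f ((σ t) k)) =
          f (t i) * ∏ k ∈ (Finset.univ.erase i).erase j, f (t k) := by
        rw [← Finset.mul_prod_erase _ (fun k => f ((σ t) k)) hjmem, hσj]
        congr 1
        refine Finset.prod_congr rfl fun k hk => ?_
        have hk' := Finset.mem_erase.1 hk
        have hk'' := Finset.mem_erase.1 hk'.2
        rw [hσk k hk''.1 hk'.1]
      set a : ℝ := (t i : ℝ) with ha
      set b : ℝ := (t j : ℝ) with hb
      set S : ℝ := ∑ k, Real.exp (ε * (t k : ℝ) / 2) with hSdef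
      set P : ℝ := ∏ k ∈ (Finset.univ.erase i).erase j, f (t k) with hP
      have hPnn : 0 ≤ P := Finset.prod_nonneg fun k _ => hf0 _ (t k).2
      have hBt : B t j = (Real.exp (ε * a / 2) * Real.exp (ε * b / 2) * (a - b) / 2) / S ^ 2 *
          (f b * P) * g a := by
        rw [hB]; dsimp only; rw [hprod]
      have hBσ : B (σ t) j = (Real.exp (ε * b / 2) * Real.exp (ε * a / 2) * (b - a) / 2) / S ^ 2 *
          (f a * P) * g b := by
        rw [hB]; dsimp only; rw [hprodσ, hSsum, hσi, hσj]
      rw [hBt, hBσ]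
      have hC : (0:ℝ) ≤ Real.exp (ε * a / 2) * Real.exp (ε * b / 2) / (2 * S ^ 2) * P :=
        mul_nonneg (div_nonneg (by positivity) (by positivity)) hPnn
      have hkey : 0 ≤ (a - b) * (f b * g a - f a * g b) := by
        rcases lt_trichotomy a b with h | h | h
        · have := hmlr b (t j).2 a (t i).2 h
          nlinarith
        · simp [h]
        · have := hmlr a (t i).2 b (t j).2 h
          nlinarith
      have heq : Real.exp (ε * a / 2) * Real.exp (ε * b / 2) * (a - b) / 2 / S ^ 2 *
            (f b * P) * g a +
          Real.exp (ε * b / 2) * Real.exp (ε * a / 2) * (b - a) / 2 / S ^ 2 *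
            (f a * P) * g b =
          Real.exp (ε * a / 2) * Real.exp (ε * b / 2) / (2 * S ^ 2) * P *
            ((a - b) * (f b * g a - f a * g b)) := by
        ring
      rw [heq]
      exact mul_nonneg hC hkey
  have h3 : (0:ℝ) ≤ ∑ t : Fin n → {x // x ∈ R}, (B t j + B (σ t) j) :=
    Finset.sum_nonneg fun t _ => hpt t
  rw [Finset.sum_add_distrib, ← h2] at h3
  linarith

theorem stmt_9 (R : Finset ℝ) (f g : ℝ → ℝ)
    (hf0 : ∀ ρ ∈ R, 0 ≤ f ρ) (hg0 : ∀ ρ ∈ R, 0 ≤ g ρ)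
    (hfs : ∑ ρ ∈ R, f ρ = 1) (hgs : ∑ ρ ∈ R, g ρ = 1)
    (hmlr : ∀ ρ ∈ R, ∀ ρ' ∈ R, ρ' < ρ → f ρ * g ρ' ≤ f ρ' * g ρ)
    (n : ℕ) (hn : 0 < n) (i : Fin n) :
    MonotoneOn (fun ε : ℝ =>
        ∑ t : Fin n → {x // x ∈ R},
          (Real.exp (ε * (t i : ℝ) / 2) / ∑ k, Real.exp (ε * (t k : ℝ) / 2)) *
            (∏ k ∈ Finset.univ.erase i, f (t k)) * g (t i))
      (Set.Ici (0 : ℝ)) := by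
  haveI : Nonempty (Fin n) := ⟨⟨0, hn⟩⟩
  have hD : ∀ ε : ℝ, HasDerivAt (fun ε : ℝ =>
      ∑ t : Fin n → {x // x ∈ R},
        (Real.exp (ε * (t i : ℝ) / 2) / ∑ k, Real.exp (ε * (t k : ℝ) / 2)) *
          (∏ k ∈ Finset.univ.erase i, f (t k)) * g (t i))
      (∑ t : Fin n → {x // x ∈ R},
        ((∑ j, Real.exp (ε * (t i : ℝ) / 2) * Real.exp (ε * (t j : ℝ) / 2) *
            ((t i : ℝ) - (t j : ℝ)) / 2) /
          (∑ k, Real.exp (ε * (t k : ℝ) / 2)) ^ 2) *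
          (∏ k ∈ Finset.univ.erase i, f (t k)) * g (t i)) ε := by
    intro ε
    exact HasDerivAt.fun_sum fun t _ =>
      ((aux_hasDerivAt_term (fun k => (t k : ℝ)) i ε).mul_const _).mul_const _
  have hmono : Monotone (fun ε : ℝ =>
      ∑ t : Fin n → {x // x ∈ R},
        (Real.exp (ε * (t i : ℝ) / 2) / ∑ k, Real.exp (ε * (t k : ℝ) / 2)) *
          (∏ k ∈ Finset.univ.erase i, f (t k)) * g (t i)) := by
    apply monotone_of_deriv_nonneg
    · exact fun ε => (hD ε).differentiableAt
    · intro ε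
      rw [(hD ε).deriv]
      exact aux_D_nonneg R f g hf0 hg0 hmlr i ε
  exact hmono.monotoneOn _
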